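/- arXiv:2309.02181 — 5 statements merged into one kernel-verified Lean document; each statement's English description precedes it below -/
import Mathlib

section
/- Let z ∈ ℂ with m = z² and let x₀ ∈ ℝ with x₀ ≠ 0. Then |Re z| < |x₀| if and only if 4x₀²·Re m − 4x₀⁴ + (Im m)² < 0; similarly |Re z| = |x₀| iff the expression equals 0, and |Re z| > |x₀| iff it is positive. -/
theorem stmt0 (z m : ℂ) (hm : m = z ^ 2) (x₀ : ℝ) (hx₀ : x₀ ≠ 0) :
    (|z.re| < |x₀| ↔ 4 * x₀ ^ 2 * m.re - 4 * x₀ ^ 4 + m.im ^ 2 < 0) ∧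
    (|z.re| = |x₀| ↔ 4 * x₀ ^ 2 * m.re - 4 * x₀ ^ 4 + m.im ^ 2 = 0) ∧
    (|z.re| > |x₀| ↔ 4 * x₀ ^ 2 * m.re - 4 * x₀ ^ 4 + m.im ^ 2 > 0) := by
  have key : 4 * x₀ ^ 2 * m.re - 4 * x₀ ^ 4 + m.im ^ 2
      = 4 * (z.re ^ 2 - x₀ ^ 2) * (x₀ ^ 2 + z.im ^ 2) := by
    subst hm
    simp only [pow_two, Complex.mul_re, Complex.mul_im]
    ring
  have hp : (0:ℝ) < x₀ ^ 2 + z.im ^ 2 := by positivity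
  have h0 : 0 ≤ |z.re| := abs_nonneg _
  have h1 : 0 ≤ |x₀| := abs_nonneg _
  have ha : z.re ^ 2 = |z.re| ^ 2 := (sq_abs _).symm
  have hb : x₀ ^ 2 = |x₀| ^ 2 := (sq_abs _).symm
  have hlt : |z.re| < |x₀| ↔ |z.re| ^ 2 < |x₀| ^ 2 :=
    ⟨fun h => by nlinarith, fun h => by nlinarith⟩
  have heq : |z.re| = |x₀| ↔ |z.re| ^ 2 = |x₀| ^ 2 :=
    ⟨fun h => by rw [h], fun h => le_antisymm (by nlinarith) (by nlinarith)⟩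
  have hgt : |x₀| < |z.re| ↔ |x₀| ^ 2 < |z.re| ^ 2 :=
    ⟨fun h => by nlinarith, fun h => by nlinarith⟩
  rw [key]
  refine ⟨?_, ?_, ?_⟩
  · rw [hlt]
    constructor
    · intro h; nlinarith
    · intro h; by_contra hc; push_neg at hc; nlinarith
  · rw [heq]
    constructor
    · intro h; nlinarith
    · intro h
      rcases lt_trichotomy (|z.re| ^ 2) (|x₀| ^ 2) with hc | hc | hc
      · exfalso; nlinarith
      · exact hc
      · exfalso; nlinarith
  · rw [gt_iff_lt, hgt]
    constructor
    · intro h; nlinarith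
    · intro h; by_contra hc; push_neg at hc; nlinarith
end

section
/- Hinged boundary conditions satisfy the Lopatinskiĭ–Šapiro condition for the augmented operator: for σ ∈ ℝ and r > 0 (or σ ≠ 0), with b₁(ξ) = 1 and b₂(ξ) = −ξ², and ρ₁, ρ₂ the two roots with positive imaginary part of ξ ↦ σ⁴ + (ξ²+r²)², the determinant of the 2×2 matrix with rows (b₁(ρ₁), b₂(ρ₁)) and (b₁(ρ₂), b₂(ρ₂)) equals −2iσ², hence is nonzero whenever σ ≠ 0. -/
theorem stmt5 (σ r : ℝ) (hr : 0 ≤ r)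
    (a b : ℝ)
    (ha : a = Real.sqrt ((Real.sqrt (σ ^ 4 + r ^ 4) - r ^ 2) / 2))
    (hb : b = Real.sqrt ((Real.sqrt (σ ^ 4 + r ^ 4) + r ^ 2) / 2))
    (ρ₁ ρ₂ : ℂ)
    (hρ₁ : ρ₁ = -(a : ℂ) + (b : ℂ) * Complex.I)
    (hρ₂ : ρ₂ = (a : ℂ) + (b : ℂ) * Complex.I)
    (b₁ b₂ : ℂ → ℂ) (hb₁ : ∀ ξ, b₁ ξ = 1) (hb₂ : ∀ ξ, b₂ ξ = -ξ ^ 2) :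
    Matrix.det !![b₁ ρ₁, b₂ ρ₁; b₁ ρ₂, b₂ ρ₂] = -2 * Complex.I * (σ : ℂ) ^ 2 ∧
    (σ ≠ 0 → Matrix.det !![b₁ ρ₁, b₂ ρ₁; b₁ ρ₂, b₂ ρ₂] ≠ 0) := by
  have hs : Real.sqrt (σ ^ 4 + r ^ 4) ^ 2 = σ ^ 4 + r ^ 4 := by
    apply Real.sq_sqrt; positivity
  have hrs : (r:ℝ) ^ 2 ≤ Real.sqrt (σ ^ 4 + r ^ 4) := by
    rw [show (r:ℝ)^2 = Real.sqrt ((r^2)^2) from (Real.sqrt_sq (by positivity)).symm]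
    apply Real.sqrt_le_sqrt; nlinarith [sq_nonneg (σ^2)]
  have hab : a * b = σ ^ 2 / 2 := by
    rw [ha, hb, ← Real.sqrt_mul (by linarith)]
    have : (Real.sqrt (σ ^ 4 + r ^ 4) - r ^ 2) / 2 *
        ((Real.sqrt (σ ^ 4 + r ^ 4) + r ^ 2) / 2) = (σ^2/2)^2 := by
      have h2 : (Real.sqrt (σ ^ 4 + r ^ 4) - r ^ 2) / 2 *
          ((Real.sqrt (σ ^ 4 + r ^ 4) + r ^ 2) / 2)
          = (Real.sqrt (σ ^ 4 + r ^ 4) ^ 2 - (r ^ 2) ^ 2) / 4 := by ring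
      rw [h2, hs]; ring
    rw [this, Real.sqrt_sq (by positivity)]
  have hC : ((a:ℂ)) * (b:ℂ) = ((σ:ℂ) ^ 2) / 2 := by exact_mod_cast congrArg Complex.ofReal hab
  have hdet : Matrix.det !![b₁ ρ₁, b₂ ρ₁; b₁ ρ₂, b₂ ρ₂] = -2 * Complex.I * (σ : ℂ) ^ 2 := by
    rw [Matrix.det_fin_two_of, hb₁, hb₁, hb₂, hb₂, hρ₁, hρ₂]
    linear_combination (-4 * Complex.I) * hC
  refine ⟨hdet, fun hσ => ?_⟩
  rw [hdet]
  simp only [ne_eq, mul_eq_zero, not_or]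
  exact ⟨⟨by norm_num, Complex.I_ne_zero⟩, pow_ne_zero _ (by exact_mod_cast hσ)⟩
end

section
/- For Neumann-type conditions b₁(ξ) = −iξ, b₂(ξ) = iξ³, and ρ₁ = −conj(ρ₂) the roots with positive imaginary part of ξ ↦ σ⁴ + (ξ²+r²)², one has ρ₁ρ₂³ − ρ₂ρ₁³ = −2iσ²√(σ⁴ + r⁴); in particular the Lopatinskiĭ–Šapiro determinant is nonzero when σ ≠ 0. -/
theorem stmt7 (σ r : ℝ) (hr : 0 ≤ r)
    (a b : ℝ)
    (ha : a = Real.sqrt ((Real.sqrt (σ ^ 4 + r ^ 4) - r ^ 2) / 2))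
    (hb : b = Real.sqrt ((Real.sqrt (σ ^ 4 + r ^ 4) + r ^ 2) / 2))
    (ρ₁ ρ₂ : ℂ)
    (hρ₁ : ρ₁ = -(a : ℂ) + (b : ℂ) * Complex.I)
    (hρ₂ : ρ₂ = (a : ℂ) + (b : ℂ) * Complex.I)
    (b₁ b₂ : ℂ → ℂ) (hb₁ : ∀ ξ, b₁ ξ = -Complex.I * ξ) (hb₂ : ∀ ξ, b₂ ξ = Complex.I * ξ ^ 3) :
    ρ₁ * ρ₂ ^ 3 - ρ₂ * ρ₁ ^ 3
      = -2 * Complex.I * (σ : ℂ) ^ 2 * ((Real.sqrt (σ ^ 4 + r ^ 4) : ℝ) : ℂ) ∧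
    (σ ≠ 0 → Matrix.det !![b₁ ρ₁, b₂ ρ₁; b₁ ρ₂, b₂ ρ₂] ≠ 0) := by
  set S := Real.sqrt (σ ^ 4 + r ^ 4) with hS
  have hnn : (0:ℝ) ≤ σ ^ 4 + r ^ 4 := by positivity
  have hr2S : r ^ 2 ≤ S := by
    rw [hS, show r ^ 2 = Real.sqrt (r ^ 4) by
      rw [show r ^ 4 = (r ^ 2) ^ 2 by ring, Real.sqrt_sq (by positivity)]]
    exact Real.sqrt_le_sqrt (by nlinarith [pow_two_nonneg (σ^2)])
  have hSnn : 0 ≤ S := Real.sqrt_nonneg _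
  have ha2 : a ^ 2 = (S - r ^ 2) / 2 := by
    rw [ha, Real.sq_sqrt (by linarith)]
  have hb2 : b ^ 2 = (S + r ^ 2) / 2 := by
    rw [hb, Real.sq_sqrt (by nlinarith [pow_two_nonneg r])]
  have hS2 : S ^ 2 = σ ^ 4 + r ^ 4 := Real.sq_sqrt hnn
  have hab : a * b = σ ^ 2 / 2 := by
    rw [ha, hb, ← Real.sqrt_mul (by linarith)]
    rw [show (S - r ^ 2) / 2 * ((S + r ^ 2) / 2) = (S ^ 2 - r ^ 4) / 4 by ring, hS2]
    rw [show (σ ^ 4 + r ^ 4 - r ^ 4) / 4 = (σ ^ 2 / 2) ^ 2 by ring,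
      Real.sqrt_sq (by positivity)]
  have hsum : a ^ 2 + b ^ 2 = S := by rw [ha2, hb2]; ring
  have key : ρ₁ * ρ₂ ^ 3 - ρ₂ * ρ₁ ^ 3
      = -2 * Complex.I * (σ : ℂ) ^ 2 * (S : ℂ) := by
    rw [hρ₁, hρ₂]
    have h1 : ((a:ℂ)^2 + (b:ℂ)^2) = (S:ℂ) := by exact_mod_cast congrArg Complex.ofReal hsum
    have h2 : (a:ℂ) * (b:ℂ) = (σ:ℂ)^2 / 2 := by exact_mod_cast congrArg Complex.ofReal hab
    have : (-(a : ℂ) + (b : ℂ) * Complex.I) * ((a : ℂ) + (b : ℂ) * Complex.I) ^ 3 -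
        ((a : ℂ) + (b : ℂ) * Complex.I) * (-(a : ℂ) + (b : ℂ) * Complex.I) ^ 3
        = -(((a:ℂ)^2 + (b:ℂ)^2) * (4 * ((a:ℂ)*(b:ℂ)))) * Complex.I := by
      have hI : Complex.I ^ 2 = -1 := Complex.I_sq
      ring_nf
      rw [show Complex.I ^ 3 = Complex.I ^ 2 * Complex.I by ring, hI]
      ring
    rw [this, h1, h2]; ring
  refine ⟨key, fun hσ => ?_⟩
  rw [Matrix.det_fin_two_of, hb₁, hb₁, hb₂, hb₂]
  have hdet : -Complex.I * ρ₁ * (Complex.I * ρ₂ ^ 3) - Complex.I * ρ₁ ^ 3 * (-Complex.I * ρ₂)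
      = ρ₁ * ρ₂ ^ 3 - ρ₂ * ρ₁ ^ 3 := by
    have hI : Complex.I ^ 2 = -1 := Complex.I_sq
    ring_nf; rw [hI]; ring
  rw [hdet, key]
  have hSpos : 0 < S := by
    have : 0 < σ ^ 4 + r ^ 4 := by positivity
    exact Real.sqrt_pos.mpr this
  simp only [ne_eq, mul_eq_zero, Complex.I_ne_zero, not_or]
  refine ⟨⟨⟨by norm_num, not_false⟩, ?_⟩, ?_⟩
  · exact pow_ne_zero 2 (Complex.ofReal_ne_zero.mpr hσ)
  · exact Complex.ofReal_ne_zero.mpr hSpos.ne'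
end

section
/- Let b₁, b₂ : ℂ → ℂ be polynomials. If ρ₁(h), ρ₂(h) are two families of complex numbers with ρ₂(h) = ρ₁(h) + h, ρ₁(h) → ρ as h → 0, and the determinant of the matrix with rows (b₁(ρ), b₂(ρ)) and (b₁'(ρ), b₂'(ρ)) is nonzero, then for all sufficiently small h ≠ 0 the determinant of the matrix with rows (b₁(ρ₁(h)), b₂(ρ₁(h))) and (b₁(ρ₂(h)), b₂(ρ₂(h))) is nonzero. -/
open Topology Polynomial

lemma divided_diff (p : Polynomial ℂ) :
    ∃ G : ℂ → ℂ → ℂ, Continuous (fun q : ℂ × ℂ => G q.1 q.2) ∧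
      (∀ x h, p.eval (x + h) = p.eval x + h * G x h) ∧
      (∀ x, G x 0 = (derivative p).eval x) := by
  set P : Polynomial (Polynomial ℂ) := (p.map C).comp (X + C X) with hP
  set Q : Polynomial (Polynomial ℂ) := (P - C p).divX with hQd
  have hPc0 : (P - C p).coeff 0 = 0 := by
    rw [coeff_zero_eq_eval_zero, eval_sub, eval_C, hP, eval_comp, eval_add, eval_X, eval_C,
      zero_add, eval_map, eval₂_C_X, sub_self]
  have hfact : P - C p = X * Q := by
    have h1 := X_mul_divX_add (P - C p)
    rw [hPc0, map_zero, add_zero] at h1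
    rw [hQd, h1]
  have hQ0 : Q.coeff 0 = derivative p := by
    rw [hQd, coeff_divX, coeff_sub, coeff_C, if_neg (Nat.succ_ne_zero 0), sub_zero, hP,
      ← taylor_apply, taylor_coeff_one, derivative_map, eval_map, eval₂_C_X]
  refine ⟨fun x h => Q.eval₂ (evalRingHom x) h, ?_, ?_, ?_⟩
  · have heq : (fun q : ℂ × ℂ => Q.eval₂ (evalRingHom q.1) q.2) =
        fun q : ℂ × ℂ => ∑ i ∈ Finset.range (Q.natDegree + 1),
          (Q.coeff i).eval q.1 * q.2 ^ i := by
      funext q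
      rw [eval₂_eq_sum_range]
      rfl
    rw [heq]
    exact continuous_finset_sum _ fun i _ =>
      (((Q.coeff i).continuous).comp continuous_fst).mul (continuous_snd.pow i)
  · intro x h
    have hid : (evalRingHom x : Polynomial ℂ →+* ℂ).comp (C : ℂ →+* Polynomial ℂ)
        = RingHom.id ℂ := RingHom.ext fun c => by simp
    have heq := congrArg (fun q => eval₂ (evalRingHom x) h q) hfact
    simp only [eval₂_sub, eval₂_mul, eval₂_X, eval₂_C, coe_evalRingHom] at heq
    have hPP : eval₂ (evalRingHom x) h P = p.eval (x + h) := by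
      rw [hP, eval₂_comp, eval₂_map, hid, eval₂_add, eval₂_X, eval₂_C, coe_evalRingHom,
        eval_X]
      simp only [eval]
      ring_nf
    rw [hPP] at heq
    linear_combination heq
  · intro x
    show eval₂ (evalRingHom x) 0 Q = _
    rw [eval₂_at_zero, hQ0, coe_evalRingHom]

theorem stmt10 (b₁ b₂ : Polynomial ℂ) (ρ : ℂ) (ρ₁ ρ₂ : ℂ → ℂ)
    (hsum : ∀ h, ρ₂ h = ρ₁ h + h)
    (hlim : Filter.Tendsto ρ₁ (𝓝[≠] (0 : ℂ)) (𝓝 ρ))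
    (hdet : b₁.eval ρ * (Polynomial.derivative b₂).eval ρ
        - b₂.eval ρ * (Polynomial.derivative b₁).eval ρ ≠ 0) :
    ∀ᶠ h in 𝓝[≠] (0 : ℂ),
      b₁.eval (ρ₁ h) * b₂.eval (ρ₂ h) - b₂.eval (ρ₁ h) * b₁.eval (ρ₂ h) ≠ 0 := by
  obtain ⟨G₁, hG₁c, hG₁e, hG₁0⟩ := divided_diff b₁
  obtain ⟨G₂, hG₂c, hG₂e, hG₂0⟩ := divided_diff b₂
  set Φ : ℂ → ℂ := fun h => b₁.eval (ρ₁ h) * G₂ (ρ₁ h) h - b₂.eval (ρ₁ h) * G₁ (ρ₁ h) h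
    with hΦ
  have hpair : Filter.Tendsto (fun h : ℂ => (ρ₁ h, h)) (𝓝[≠] (0 : ℂ)) (𝓝 (ρ, 0)) := by
    rw [nhds_prod_eq]
    exact hlim.prodMk (Filter.tendsto_id.mono_left nhdsWithin_le_nhds)
  have hcont : Continuous fun q : ℂ × ℂ =>
      b₁.eval q.1 * G₂ q.1 q.2 - b₂.eval q.1 * G₁ q.1 q.2 :=
    ((b₁.continuous.comp continuous_fst).mul hG₂c).sub
      ((b₂.continuous.comp continuous_fst).mul hG₁c)
  have hT : Filter.Tendsto Φ (𝓝[≠] (0 : ℂ))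
      (𝓝 (b₁.eval ρ * (derivative b₂).eval ρ - b₂.eval ρ * (derivative b₁).eval ρ)) := by
    have := (hcont.continuousAt (x := (ρ, 0))).tendsto.comp hpair
    simpa [hG₁0, hG₂0, hΦ, Function.comp_def] using this
  have hne := hT.eventually_ne hdet
  filter_upwards [hne, self_mem_nhdsWithin] with h hΦne hh0
  have hD : b₁.eval (ρ₁ h) * b₂.eval (ρ₂ h) - b₂.eval (ρ₁ h) * b₁.eval (ρ₂ h) = h * Φ h := by
    rw [hsum h, hG₁e, hG₂e, hΦ]
    ring
  rw [hD]
  exact mul_ne_zero hh0 hΦne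
end

section
/- Let h(t) = (1/2)(e^{−t}·cos(t − π/4) − e^{t}·cos(t + π/4)). For any 0 < a < b and t₀ > 0, there exists C₀ > 0 such that ∫_{at}^{bt} h(s)² ds ≥ C₀ for all t ≥ t₀. -/
open Real

noncomputable def Haux (s : ℝ) : ℝ :=
  Real.exp (2*s) * (2 - Real.sin (2*s) + Real.cos (2*s)) / 32
  - Real.exp (-(2*s)) * (2 + Real.sin (2*s) + Real.cos (2*s)) / 32
  - Real.sin (2*s) / 8

lemma Haux_hasDerivAt (s : ℝ) :
    HasDerivAt Haux
      (((1/2) * (Real.exp (-s) * Real.cos (s - Real.pi/4) - Real.exp s * Real.cos (s + Real.pi/4)))^2) s := by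
  have hd : HasDerivAt (fun x : ℝ => 2*x) 2 s := by
    simpa using (hasDerivAt_id s).const_mul 2
  have hnd : HasDerivAt (fun x : ℝ => -(2*x)) (-2) s := hd.neg
  have he : HasDerivAt (fun x => Real.exp (2*x)) (Real.exp (2*s) * 2) s :=
    (Real.hasDerivAt_exp _).comp s hd
  have hen : HasDerivAt (fun x => Real.exp (-(2*x))) (Real.exp (-(2*s)) * (-2)) s :=
    (Real.hasDerivAt_exp _).comp s hnd
  have hs2 : HasDerivAt (fun x => Real.sin (2*x)) (Real.cos (2*s) * 2) s :=
    (Real.hasDerivAt_sin _).comp s hd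
  have hc2 : HasDerivAt (fun x => Real.cos (2*x)) (-Real.sin (2*s) * 2) s :=
    (Real.hasDerivAt_cos _).comp s hd
  have H1 : HasDerivAt (fun x => Real.exp (2*x) * (2 - Real.sin (2*x) + Real.cos (2*x)) / 32)
      ((Real.exp (2*s) * 2 * (2 - Real.sin (2*s) + Real.cos (2*s))
        + Real.exp (2*s) * (0 - Real.cos (2*s) * 2 + -Real.sin (2*s) * 2)) / 32) s :=
    (he.mul (((hasDerivAt_const s (2:ℝ)).sub hs2).add hc2)).div_const 32
  have H2 : HasDerivAt (fun x => Real.exp (-(2*x)) * (2 + Real.sin (2*x) + Real.cos (2*x)) / 32)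
      ((Real.exp (-(2*s)) * (-2) * (2 + Real.sin (2*s) + Real.cos (2*s))
        + Real.exp (-(2*s)) * (0 + Real.cos (2*s) * 2 + -Real.sin (2*s) * 2)) / 32) s :=
    (hen.mul (((hasDerivAt_const s (2:ℝ)).add hs2).add hc2)).div_const 32
  have H3 : HasDerivAt (fun x => Real.sin (2*x) / 8) ((Real.cos (2*s) * 2) / 8) s :=
    hs2.div_const 8
  have key := (H1.sub H2).sub H3
  unfold Haux
  refine key.congr_deriv ?_
  symm
  have hpi : Real.cos (Real.pi/4) = Real.sqrt 2 / 2 := Real.cos_pi_div_four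
  have hpis : Real.sin (Real.pi/4) = Real.sqrt 2 / 2 := Real.sin_pi_div_four
  have hsq : Real.sqrt 2 ^ 2 = 2 := Real.sq_sqrt (by norm_num)
  have hEF : Real.exp s * Real.exp (-s) = 1 := by
    rw [← Real.exp_add]; simp
  rw [Real.cos_sub, Real.cos_add, hpi, hpis]
  rw [show (2:ℝ)*s = s+s from by ring]
  rw [show -(s+s) = -s + -s from by ring]
  rw [Real.exp_add, Real.exp_add, Real.sin_add, Real.cos_add]
  linear_combination ((Real.exp s)^2 + (Real.exp (-s))^2)/8 * Real.sin_sq_add_cos_sq s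
    - ((Real.cos s)^2 - (Real.sin s)^2)/4 * hEF
    + (Real.exp (-s)*(Real.cos s + Real.sin s) - Real.exp s*(Real.cos s - Real.sin s))^2/16 * hsq

set_option maxHeartbeats 1000000 in
theorem stmt15 (h : ℝ → ℝ)
    (hh : ∀ t, h t = (1 / 2) * (Real.exp (-t) * Real.cos (t - Real.pi / 4)
        - Real.exp t * Real.cos (t + Real.pi / 4)))
    (a b t₀ : ℝ) (ha : 0 < a) (hab : a < b) (ht₀ : 0 < t₀) :
    ∃ C₀ > 0, ∀ t ≥ t₀, C₀ ≤ ∫ s in (a * t)..(b * t), (h s) ^ 2 := by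
  have hcont : Continuous h := by
    have : h = fun t => (1 / 2) * (Real.exp (-t) * Real.cos (t - Real.pi / 4)
        - Real.exp t * Real.cos (t + Real.pi / 4)) := funext hh
    rw [this]; fun_prop
  have HD : ∀ s, HasDerivAt Haux ((h s)^2) s := by
    intro s
    have := Haux_hasDerivAt s
    rwa [← hh s] at this
  have hdiff : Differentiable ℝ Haux := fun s => (HD s).differentiableAt
  have HcontH : Continuous Haux := hdiff.continuous
  have hmono : Monotone Haux :=
    monotone_of_deriv_nonneg hdiff (fun s => by rw [(HD s).deriv]; positivity)
  have hint : ∀ p q : ℝ, ∫ s in p..q, (h s)^2 = Haux q - Haux p := fun p q =>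
    intervalIntegral.integral_eq_sub_of_hasDerivAt (fun x _ => HD x)
      ((hcont.pow 2).intervalIntegrable p q)
  -- strict growth of Haux on positive intervals
  have hpos : ∀ p q : ℝ, 0 < p → p < q → Haux p < Haux q := by
    intro p q hp hpq
    have hex : ∃ s₀ ∈ Set.Ioo p q, h s₀ ≠ 0 := by
      by_contra hcon
      push_neg at hcon
      have hg : ∀ s ∈ Set.Ioo p q,
          Real.sin s * Real.cosh s - Real.cos s * Real.sinh s = 0 := by
        intro s hs
        have h0 := hcon s hs
        rw [hh s, Real.cos_sub, Real.cos_add, Real.cos_pi_div_four, Real.sin_pi_div_four] at h0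
        have hsq : Real.sqrt 2 ^ 2 = 2 := Real.sq_sqrt (by norm_num)
        rw [Real.cosh_eq, Real.sinh_eq]
        linear_combination Real.sqrt 2 * h0
          - (Real.exp (-s)*(Real.cos s + Real.sin s) - Real.exp s*(Real.cos s - Real.sin s))/4 * hsq
      have hsin : ∀ s ∈ Set.Ioo p q, Real.sin s = 0 := by
        intro s hs
        have hev : (fun x => Real.sin x * Real.cosh x - Real.cos x * Real.sinh x)
            =ᶠ[nhds s] (fun _ => (0:ℝ)) := by
          filter_upwards [Ioo_mem_nhds hs.1 hs.2] with x hx using hg x hx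
        have hd1 : HasDerivAt (fun x => Real.sin x * Real.cosh x - Real.cos x * Real.sinh x)
            (2 * Real.sin s * Real.sinh s) s := by
          have := ((Real.hasDerivAt_sin s).mul (Real.hasDerivAt_cosh s)).sub
            ((Real.hasDerivAt_cos s).mul (Real.hasDerivAt_sinh s))
          refine this.congr_deriv ?_
          ring
        have hd2 : HasDerivAt (fun x => Real.sin x * Real.cosh x - Real.cos x * Real.sinh x)
            0 s := (hasDerivAt_const s (0:ℝ)).congr_of_eventuallyEq hev
        have h20 : 2 * Real.sin s * Real.sinh s = 0 := hd1.unique hd2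
        have hsh : 0 < Real.sinh s := Real.sinh_pos_iff.mpr (hp.trans hs.1)
        rcases mul_eq_zero.mp h20 with h' | h'
        · rcases mul_eq_zero.mp h' with h'' | h''
          · norm_num at h''
          · exact h''
        · exact absurd h' (ne_of_gt hsh)
      have hcos : ∀ s ∈ Set.Ioo p q, Real.cos s = 0 := by
        intro s hs
        have hev : Real.sin =ᶠ[nhds s] (fun _ => (0:ℝ)) := by
          filter_upwards [Ioo_mem_nhds hs.1 hs.2] with x hx using hsin x hx
        have hd2 : HasDerivAt Real.sin 0 s :=
          (hasDerivAt_const s (0:ℝ)).congr_of_eventuallyEq hev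
        exact (Real.hasDerivAt_sin s).unique hd2
      have hm : (p+q)/2 ∈ Set.Ioo p q := by constructor <;> linarith
      have := Real.sin_sq_add_cos_sq ((p+q)/2)
      rw [hsin _ hm, hcos _ hm] at this
      norm_num at this
    obtain ⟨s₀, hs₀, hns⟩ := hex
    have hopen : IsOpen ({x | h x ≠ 0} ∩ Set.Ioo p q) :=
      (isOpen_compl_singleton.preimage hcont).inter isOpen_Ioo
    obtain ⟨ε, hε, hball⟩ := Metric.isOpen_iff.mp hopen s₀ ⟨hns, hs₀⟩
    have huv : Set.Icc (s₀ - ε/2) (s₀ + ε/2) ⊆ {x | h x ≠ 0} ∩ Set.Ioo p q := by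
      intro x hx
      apply hball
      rw [Metric.mem_ball, Real.dist_eq, abs_lt]
      constructor <;> [linarith [hx.1]; linarith [hx.2]]
    have hsm : StrictMonoOn Haux (Set.Icc (s₀ - ε/2) (s₀ + ε/2)) := by
      apply strictMonoOn_of_deriv_pos (convex_Icc _ _) HcontH.continuousOn
      intro x hx
      rw [interior_Icc] at hx
      rw [(HD x).deriv]
      have : h x ≠ 0 := (huv (Set.Ioo_subset_Icc_self hx)).1
      positivity
    have huvm : s₀ - ε/2 < s₀ + ε/2 := by linarith
    have h1 : Haux (s₀ - ε/2) < Haux (s₀ + ε/2) :=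
      hsm (Set.left_mem_Icc.mpr huvm.le) (Set.right_mem_Icc.mpr huvm.le) huvm
    have hu := (huv (Set.left_mem_Icc.mpr huvm.le)).2
    have hv := (huv (Set.right_mem_Icc.mpr huvm.le)).2
    calc Haux p ≤ Haux (s₀ - ε/2) := hmono hu.1.le
      _ < Haux (s₀ + ε/2) := h1
      _ ≤ Haux q := hmono hv.2.le
  -- set up the compact part
  set ℓ := (b - a) * t₀ with hℓdef
  have hℓ : 0 < ℓ := mul_pos (by linarith) ht₀
  set T := max t₀ (3/(b-a)) with hTdef
  have ht₀T : t₀ ≤ T := le_max_left _ _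
  have hcompact : ∃ x₀ ∈ Set.Icc (a*t₀) (a*T), ∀ x ∈ Set.Icc (a*t₀) (a*T),
      Haux (x₀ + ℓ) - Haux x₀ ≤ Haux (x + ℓ) - Haux x := by
    obtain ⟨x₀, hx₀, hmin⟩ := IsCompact.exists_isMinOn isCompact_Icc
      ⟨a*t₀, Set.left_mem_Icc.mpr (mul_le_mul_of_nonneg_left ht₀T ha.le)⟩
      (((HcontH.comp (continuous_id.add continuous_const)).sub HcontH).continuousOn
        (s := Set.Icc (a*t₀) (a*T)))
    exact ⟨x₀, hx₀, fun x hx => hmin hx⟩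
  obtain ⟨x₀, hx₀mem, hx₀min⟩ := hcompact
  set m := Haux (x₀ + ℓ) - Haux x₀ with hmdef
  have hm : 0 < m := by
    have hx₀pos : 0 < x₀ := lt_of_lt_of_le (mul_pos ha ht₀) hx₀mem.1
    have := hpos x₀ (x₀ + ℓ) hx₀pos (by linarith)
    linarith
  refine ⟨min m 1, by positivity, ?_⟩
  intro t ht
  rw [hint]
  have htpos : 0 < t := lt_of_lt_of_le ht₀ ht
  rcases le_or_gt t T with hcase | hcase
  · -- compact case
    have hmem : a*t ∈ Set.Icc (a*t₀) (a*T) :=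
      ⟨mul_le_mul_of_nonneg_left ht ha.le, mul_le_mul_of_nonneg_left hcase ha.le⟩
    have hstep : a*t + ℓ ≤ b*t := by
      have : ℓ ≤ (b-a)*t := mul_le_mul_of_nonneg_left ht (by linarith)
      linarith
    have := hx₀min (a*t) hmem
    have h2 : Haux (a*t + ℓ) ≤ Haux (b*t) := hmono hstep
    have h3 : min m 1 ≤ m := min_le_left _ _
    linarith
  · -- tail case
    have htT : 3/(b-a) ≤ t := le_trans (le_max_right _ _) hcase.le
    have hba : 0 < b - a := by linarith
    have h6 : (6:ℝ) ≤ 2*(b*t) - 2*(a*t) := by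
      have : 3 ≤ (b-a)*t := by
        rw [div_le_iff₀ hba] at htT
        linarith [htT]
      nlinarith
    have trig : ∀ θ:ℝ, Real.sin θ - Real.cos θ ≤ 3/2 := by
      intro θ
      nlinarith [Real.sin_sq_add_cos_sq θ, sq_nonneg (Real.sin θ + Real.cos θ),
        sq_nonneg (Real.sin θ - Real.cos θ - 3/2)]
    have hE6 : Real.exp (2*(a*t)) * 400 ≤ Real.exp (2*(b*t)) := by
      have h1 : Real.exp (2*(b*t)) = Real.exp (2*(a*t)) * Real.exp (2*(b*t) - 2*(a*t)) := by
        rw [← Real.exp_add]; ring_nf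
      have h2 : Real.exp 6 ≤ Real.exp (2*(b*t) - 2*(a*t)) := Real.exp_le_exp.mpr h6
      have h3 : (400:ℝ) ≤ Real.exp 6 := by
        have h4 : Real.exp 6 = Real.exp 1 ^ 6 := by
          rw [← Real.exp_nat_mul]; norm_num
        have h5 := Real.exp_one_gt_d9
        rw [h4]
        calc (400:ℝ) ≤ 2.7182818283^6 := by norm_num
          _ ≤ Real.exp 1 ^ 6 := pow_le_pow_left₀ (by norm_num) h5.le 6
      rw [h1]
      have := Real.exp_pos (2*(a*t))
      nlinarith
    have hex1 : (1:ℝ) ≤ Real.exp (2*(a*t)) := Real.one_le_exp (by positivity)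
    have heny : Real.exp (-(2*(b*t))) ≤ 1 := Real.exp_le_one_iff.mpr (by nlinarith)
    have henype : 0 < Real.exp (-(2*(b*t))) := Real.exp_pos _
    have henx : 0 < Real.exp (-(2*(a*t))) := Real.exp_pos _
    have hA : Real.exp (2*(b*t)) * (1/2) ≤
        Real.exp (2*(b*t)) * (2 - Real.sin (2*(b*t)) + Real.cos (2*(b*t))) := by
      apply mul_le_mul_of_nonneg_left _ (Real.exp_pos _).le
      linarith [trig (2*(b*t))]
    have hB : Real.exp (-(2*(b*t))) * (2 + Real.sin (2*(b*t)) + Real.cos (2*(b*t))) ≤ 4 := by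
      have hs := Real.neg_one_le_sin (2*(b*t))
      nlinarith [Real.sin_le_one (2*(b*t)), Real.cos_le_one (2*(b*t)),
        Real.neg_one_le_sin (2*(b*t)), Real.neg_one_le_cos (2*(b*t))]
    have hC : 0 ≤ Real.exp (-(2*(a*t))) * (2 + Real.sin (2*(a*t)) + Real.cos (2*(a*t))) := by
      apply mul_nonneg henx.le
      nlinarith [Real.neg_one_le_sin (2*(a*t)), Real.neg_one_le_cos (2*(a*t))]
    have hD4 : Real.exp (2*(a*t)) * (2 - Real.sin (2*(a*t)) + Real.cos (2*(a*t))) ≤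
        Real.exp (2*(a*t)) * 4 := by
      apply mul_le_mul_of_nonneg_left _ (Real.exp_pos _).le
      nlinarith [Real.neg_one_le_sin (2*(a*t)), Real.cos_le_one (2*(a*t))]
    have hmin1 : min m 1 ≤ 1 := min_le_right _ _
    unfold Haux
    have hsy := Real.sin_le_one (2*(b*t))
    have hsx := Real.neg_one_le_sin (2*(a*t))
    linarith
end
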